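/- Every acyclic fibration in a tribe admits a section; consequently, every object in a tribe is cofibrant (has the left lifting property against acyclic fibrations). -/

import Mathlib

open CategoryTheory CategoryTheory.Limits

universe v u

namespace Paper

variable {T : Type u} [Category.{v} T]

/-- A morphism is anodyne (w.r.t. a class of fibrations) if it has the left
lifting property against all fibrations. -/
def Anodyne (Fib : MorphismProperty T) : MorphismProperty T :=
  fun _ _ i => ∀ ⦃u w : T⦄ (g : u ⟶ w), Fib g → HasLiftingProperty i g

/-- A tribe structure on a category `T`. -/
structure TribeStruct (T : Type u) [Category.{v} T] where
  /-- fibrations -/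
  Fib : MorphismProperty T
  fib_id : ∀ x : T, Fib (𝟙 x)
  fib_comp : ∀ {x y z : T} (f : x ⟶ y) (g : y ⟶ z), Fib f → Fib g → Fib (f ≫ g)
  /-- (T1): terminal object, all objects fibrant -/
  term : T
  isTerminal : IsTerminal term
  all_fibrant : ∀ x : T, Fib (isTerminal.from x)
  /-- (T2): pullbacks along fibrations exist and fibrations are stable -/
  pullback_exists : ∀ {x y z : T} (f : x ⟶ z) (g : y ⟶ z), Fib g → HasPullback f g
  fib_stable : ∀ {p x y z : T} {fst : p ⟶ x} {snd : p ⟶ y} {f : x ⟶ z} {g : y ⟶ z},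
    IsPullback fst snd f g → Fib g → Fib fst
  /-- (T3): factorization as anodyne followed by fibration -/
  factor : ∀ {x y : T} (f : x ⟶ y), ∃ (z : T) (i : x ⟶ z) (q : z ⟶ y),
    Anodyne Fib i ∧ Fib q ∧ i ≫ q = f
  /-- (T4): anodyne morphisms are stable under pullback along fibrations -/
  anodyne_stable : ∀ {p x y z : T} {fst : p ⟶ x} {snd : p ⟶ y} {f : x ⟶ z} {g : y ⟶ z},
    IsPullback fst snd f g → Anodyne Fib f → Fib g → Anodyne Fib snd

/-- A path object for `x` in a tribe: a factorization of the diagonal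
`x → x × x` as an anodyne morphism followed by a fibration (the product is
presented by an explicit binary product cone). -/
structure PathObject (R : TribeStruct T) (x : T) where
  P : T
  σ : x ⟶ P
  π₀ : P ⟶ x
  π₁ : P ⟶ x
  σ_anodyne : Anodyne R.Fib σ
  σ_π₀ : σ ≫ π₀ = 𝟙 x
  σ_π₁ : σ ≫ π₁ = 𝟙 x
  prod : T
  p₀ : prod ⟶ x
  p₁ : prod ⟶ x
  isProd : IsLimit (BinaryFan.mk p₀ p₁)
  π : P ⟶ prod
  π_p₀ : π ≫ p₀ = π₀
  π_p₁ : π ≫ p₁ = π₁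
  π_fib : R.Fib π

/-- Homotopy of morphisms in a tribe. -/
def Homotopic (R : TribeStruct T) {x y : T} (f g : x ⟶ y) : Prop :=
  ∃ (Po : PathObject R y) (H : x ⟶ Po.P), H ≫ Po.π₀ = f ∧ H ≫ Po.π₁ = g

/-- Homotopy equivalences in a tribe. -/
def IsHtpyEquiv (R : TribeStruct T) {x y : T} (f : x ⟶ y) : Prop :=
  ∃ g : y ⟶ x, Homotopic R (f ≫ g) (𝟙 x) ∧ Homotopic R (g ≫ f) (𝟙 y)

/-- Homotopy equivalences (= weak equivalences) of a tribe as a morphism property. -/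
def hW (R : TribeStruct T) : MorphismProperty T :=
  fun _ _ f => IsHtpyEquiv R f

end Paper

open Paper in
/-- Every acyclic fibration in a tribe admits a section;
consequently, every object of a tribe is cofibrant. -/
theorem acyclic_fib_section_and_cofibrant {T : Type u} [Category.{v} T]
    (R : Paper.TribeStruct T) :
    (∀ {x y : T} (p : x ⟶ y), R.Fib p → IsHtpyEquiv R p →
      ∃ s : y ⟶ x, s ≫ p = 𝟙 y) ∧
    (∀ (a : T) {x y : T} (p : x ⟶ y), R.Fib p → IsHtpyEquiv R p →
      ∀ f : a ⟶ y, ∃ g : a ⟶ x, g ≫ p = f) := by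
  have sec : ∀ {x y : T} (p : x ⟶ y), R.Fib p → IsHtpyEquiv R p →
      ∃ s : y ⟶ x, s ≫ p = 𝟙 y := by
    intro x y p hp he
    obtain ⟨g, -, Po, H, hH0, hH1⟩ := he
    haveI : HasPullback Po.π₀ p := R.pullback_exists Po.π₀ p hp
    have hfst : R.Fib (pullback.fst Po.π₀ p) :=
      R.fib_stable (IsPullback.of_hasPullback Po.π₀ p) hp
    -- the map j = (p ≫ σ, 𝟙) : x ⟶ PY ×_y x
    have hj0 : (p ≫ Po.σ) ≫ Po.π₀ = 𝟙 x ≫ p := by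
      rw [Category.assoc, Po.σ_π₀]; simp
    set j : x ⟶ pullback Po.π₀ p := pullback.lift (p ≫ Po.σ) (𝟙 x) hj0 with hjdef
    have hjfst : j ≫ pullback.fst Po.π₀ p = p ≫ Po.σ := by rw [hjdef]; exact pullback.lift_fst _ _ _
    have hjsnd : j ≫ pullback.snd Po.π₀ p = 𝟙 x := by rw [hjdef]; exact pullback.lift_snd _ _ _
    have key : ∀ (s : PullbackCone Po.σ (pullback.fst Po.π₀ p)),
        (s.snd ≫ pullback.snd Po.π₀ p) ≫ p = s.fst := by
      intro s
      rw [Category.assoc, ← pullback.condition, ← Category.assoc, ← s.condition,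
        Category.assoc, Po.σ_π₀, Category.comp_id]
    -- j is a pullback of the anodyne map σ along the fibration `fst`
    have hPB : IsPullback p j Po.σ (pullback.fst Po.π₀ p) := by
      refine IsPullback.of_isLimit' ⟨hjfst.symm⟩ ?_
      refine PullbackCone.IsLimit.mk _ (fun s => s.snd ≫ pullback.snd Po.π₀ p) ?_ ?_ ?_
      · intro s
        exact key s
      · intro s
        show (s.snd ≫ pullback.snd Po.π₀ p) ≫ j = s.snd
        apply pullback.hom_ext
        · rw [Category.assoc, hjfst, ← Category.assoc, key s, s.condition]
        · rw [Category.assoc, hjsnd, Category.comp_id]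
      · intro s m hm1 hm2
        show m = s.snd ≫ pullback.snd Po.π₀ p
        rw [← hm2, Category.assoc, hjsnd, Category.comp_id]
    have hjan : Anodyne R.Fib j := R.anodyne_stable hPB Po.σ_anodyne hfst
    haveI : HasLiftingProperty j p := hjan p hp
    have hsq : CommSq (𝟙 x) j p (pullback.fst Po.π₀ p ≫ Po.π₁) := by
      constructor
      rw [← Category.assoc, hjfst, Category.assoc, Po.σ_π₁, Category.comp_id,
        Category.id_comp]
    have hHg : H ≫ Po.π₀ = g ≫ p := by rw [hH0]
    refine ⟨pullback.lift H g hHg ≫ hsq.lift, ?_⟩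
    rw [Category.assoc, hsq.fac_right, ← Category.assoc, pullback.lift_fst, hH1]
  refine ⟨fun {x y} p hp he => sec p hp he, fun a {x y} p hp he f => ?_⟩
  obtain ⟨s, hs⟩ := sec p hp he
  exact ⟨f ≫ s, by rw [Category.assoc, hs, Category.comp_id]⟩
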